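/- Suppose there exists a generalized quadrangle G of order (m, n) containing a subquadrangle G' of order (m, n/m) (so m divides n). Deleting the points and lines of G' from G leaves (m²−1)n points and (m²−1)n(n+1)/m lines; moreover (m+1)(n+1)·((m−1)n/m) = (m²−1)n(n+1)/m, and each remaining line contains exactly one deleted point, so the incidence graph of the remaining structure is an (m, n+1; 8)-bipartite biregular graph of order (m+n+1)(m²−1)n/m. -/

import Mathlib

/-- A finite generalized quadrangle of order `(s,t)`. -/
structure GenQuad (P L : Type*) (s t : ℕ) where
  inc : P → L → Prop
  line_pts : ∀ ℓ : L, {p : P | inc p ℓ}.ncard = s + 1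
  pt_lines : ∀ p : P, {ℓ : L | inc p ℓ}.ncard = t + 1
  unique_line : ∀ ⦃p q : P⦄ ⦃ℓ ℓ' : L⦄, p ≠ q → inc p ℓ → inc q ℓ →
    inc p ℓ' → inc q ℓ' → ℓ = ℓ'
  gq : ∀ (p : P) (ℓ : L), ¬ inc p ℓ →
    ∃! q : P, inc q ℓ ∧ q ≠ p ∧ ∃ ℓ' : L, inc p ℓ' ∧ inc q ℓ'

/-- Two distinct points are collinear if some line is incident with both. -/
def GenQuad.coll {P L : Type*} {s t : ℕ} (G : GenQuad P L s t) (p q : P) : Prop :=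
  p ≠ q ∧ ∃ ℓ : L, G.inc p ℓ ∧ G.inc q ℓ

/-- The incidence graph of a point-line incidence relation `I`. -/
def incGraph {P L : Type*} (I : P → L → Prop) : SimpleGraph (P ⊕ L) where
  Adj x y :=
    match x, y with
    | Sum.inl p, Sum.inr l => I p l
    | Sum.inr l, Sum.inl p => I p l
    | _, _ => False
  symm := ⟨by rintro (p | l) (p' | l') h <;> exact h⟩
  loopless := ⟨by rintro (p | l) h <;> exact h⟩

section Aux

variable {P L : Type*} {I : P → L → Prop}

@[simp] lemma incGraph_adj_inl_inr {p : P} {l : L} :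
    (incGraph I).Adj (Sum.inl p) (Sum.inr l) ↔ I p l := Iff.rfl

@[simp] lemma incGraph_adj_inr_inl {p : P} {l : L} :
    (incGraph I).Adj (Sum.inr l) (Sum.inl p) ↔ I p l := Iff.rfl

@[simp] lemma incGraph_adj_inl_inl {p q : P} :
    ¬ (incGraph I).Adj (Sum.inl p) (Sum.inl q) := fun h => h

@[simp] lemma incGraph_adj_inr_inr {l l' : L} :
    ¬ (incGraph I).Adj (Sum.inr l) (Sum.inr l') := fun h => h

lemma incGraph_walk_parity {u v : P ⊕ L} (w : (incGraph I).Walk u v) :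
    Even w.length ↔ (u.isLeft = v.isLeft) := by
  induction w with
  | nil => simp
  | @cons u b v h w ih =>
    have hub : u.isLeft = !b.isLeft := by
      rcases u with p | l <;> rcases b with p' | l' <;> simp_all
    rw [SimpleGraph.Walk.length_cons, Nat.even_add_one, ih, hub]
    rcases b.isLeft with _ | _ <;> rcases v.isLeft with _ | _ <;> simp

lemma ncard_setOf_eq_card_filter {α : Type*} [Fintype α] (p : α → Prop) [DecidablePred p] :
    {x | p x}.ncard = (Finset.univ.filter p).card := by
  rw [Set.ncard_eq_toFinset_card', Set.toFinset_setOf]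

end Aux

theorem stmt14 {P L : Type*} [Finite P] [Finite L] (m n : ℕ) (hm : 2 ≤ m) (hmn : m ≤ n)
    (hdvd : m ∣ n)
    (G : GenQuad P L m n)
    (hP : Nat.card P = (m + 1) * (m * n + 1)) (hL : Nat.card L = (n + 1) * (m * n + 1))
    (P₀ : Set P) (L₀ : Set L)
    (G' : GenQuad {p : P // p ∈ P₀} {ℓ : L // ℓ ∈ L₀} m (n / m))
    (hG' : ∀ (p : {p : P // p ∈ P₀}) (ℓ : {ℓ : L // ℓ ∈ L₀}), G'.inc p ℓ ↔ G.inc p.1 ℓ.1)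
    (hP₀ : P₀.ncard = (m + 1) * (n + 1)) (hL₀ : L₀.ncard = (n / m + 1) * (n + 1))
    (hsub : ∀ ℓ ∈ L₀, ∀ p : P, G.inc p ℓ → p ∈ P₀) :
    {p : P | p ∉ P₀}.ncard = (m ^ 2 - 1) * n ∧
    {ℓ : L | ℓ ∉ L₀}.ncard = (m ^ 2 - 1) * n * (n + 1) / m ∧
    (m + 1) * (n + 1) * ((m - 1) * n / m) = (m ^ 2 - 1) * n * (n + 1) / m ∧
    (∀ ℓ : L, ℓ ∉ L₀ → {p ∈ P₀ | G.inc p ℓ}.ncard = 1) ∧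
    (let Γ := incGraph (fun (p : {p : P // p ∉ P₀}) (ℓ : {ℓ : L // ℓ ∉ L₀}) => G.inc p.1 ℓ.1)
     Γ.girth = 8 ∧
     (∀ p : {p : P // p ∉ P₀}, (Γ.neighborSet (Sum.inl p)).ncard = n + 1) ∧
     (∀ ℓ : {ℓ : L // ℓ ∉ L₀}, (Γ.neighborSet (Sum.inr ℓ)).ncard = m) ∧
     Nat.card ({p : P // p ∉ P₀} ⊕ {ℓ : L // ℓ ∉ L₀}) = (m + n + 1) * (m ^ 2 - 1) * n / m) := by
  classical
  obtain ⟨k, hk⟩ := hdvd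
  have hm0 : 0 < m := by omega
  have hkm : n / m = k := by rw [hk]; exact Nat.mul_div_cancel_left k hm0
  have hk1 : 1 ≤ k := by
    by_contra h
    have hk0 : k = 0 := by omega
    rw [hk0, Nat.mul_zero] at hk; omega
  have hn2 : 2 ≤ n := le_trans hm hmn
  have hmsq : 1 ≤ m ^ 2 := Nat.one_le_pow _ _ hm0
  haveI : Fintype P := Fintype.ofFinite P
  haveI : Fintype L := Fintype.ofFinite L
  -- Part 1 : outside points count
  have hOut : {p : P | p ∉ P₀}.ncard = (m ^ 2 - 1) * n := by
    have h1 : P₀.ncard + P₀ᶜ.ncard = Nat.card P := Set.ncard_add_ncard_compl P₀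
    have h2 : {p : P | p ∉ P₀} = P₀ᶜ := rfl
    rw [h2]
    have key : (m + 1) * (n + 1) + (m ^ 2 - 1) * n = (m + 1) * (m * n + 1) := by
      zify [hmsq]; ring
    omega
  -- arithmetic: the divisions
  have ediv : (m ^ 2 - 1) * n * (n + 1) / m = (m ^ 2 - 1) * k * (n + 1) := by
    rw [show (m ^ 2 - 1) * n * (n + 1) = m * ((m ^ 2 - 1) * k * (n + 1)) by rw [hk]; ring]
    exact Nat.mul_div_cancel_left _ hm0
  have ediv2 : (m - 1) * n / m = (m - 1) * k := by
    rw [show (m - 1) * n = m * ((m - 1) * k) by rw [hk]; ring]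
    exact Nat.mul_div_cancel_left _ hm0
  -- Part 2 : outside lines count
  have hLoutVal : {ℓ : L | ℓ ∉ L₀}.ncard = (m ^ 2 - 1) * k * (n + 1) := by
    have h1 : L₀.ncard + L₀ᶜ.ncard = Nat.card L := Set.ncard_add_ncard_compl L₀
    have h2 : {ℓ : L | ℓ ∉ L₀} = L₀ᶜ := rfl
    rw [h2]
    have key : (k + 1) * (n + 1) + (m ^ 2 - 1) * k * (n + 1) = (n + 1) * (m * n + 1) := by
      zify [hmsq]
      have : (n : ℤ) = m * k := by exact_mod_cast hk
      rw [this]; ring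
    rw [hkm] at hL₀
    omega
  have hLout : {ℓ : L | ℓ ∉ L₀}.ncard = (m ^ 2 - 1) * n * (n + 1) / m := by
    rw [hLoutVal, ediv]
  -- Part 3 : pure arithmetic
  have hArith : (m + 1) * (n + 1) * ((m - 1) * n / m) = (m ^ 2 - 1) * n * (n + 1) / m := by
    rw [ediv, ediv2]
    zify [hmsq, show 1 ≤ m by omega]
    ring
  -- the unique line through two points of P₀ is in L₀
  have hL1 : ∀ ℓ, ℓ ∉ L₀ → ∀ p, p ∈ P₀ → ∀ q, q ∈ P₀ →
      G.inc p ℓ → G.inc q ℓ → p = q := by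
    intro ℓ hℓ p hp q hq hpℓ hqℓ
    by_contra hne
    have h1 : {ℓ' : {ℓ // ℓ ∈ L₀} | G'.inc ⟨q, hq⟩ ℓ'}.ncard = n / m + 1 := G'.pt_lines _
    have h2 : {ℓ' : {ℓ // ℓ ∈ L₀} | G'.inc ⟨q, hq⟩ ℓ'}.Nonempty := by
      apply Set.nonempty_of_ncard_ne_zero; omega
    obtain ⟨ℓ', hℓ'⟩ := h2
    have hqℓ' : G.inc q ℓ'.1 := (hG' _ _).mp hℓ'
    by_cases hpℓ' : G.inc p ℓ'.1
    · have : ℓ = ℓ'.1 := G.unique_line hne hpℓ hqℓ hpℓ' hqℓ'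
      rw [this] at hℓ; exact hℓ ℓ'.2
    · have hpℓ'' : ¬ G'.inc ⟨p, hp⟩ ℓ' := fun h => hpℓ' ((hG' _ _).mp h)
      obtain ⟨r, ⟨hrℓ', hrp, lam, hplam, hrlam⟩, -⟩ := G'.gq ⟨p, hp⟩ ℓ' hpℓ''
      obtain ⟨z, hz, huniq⟩ := G.gq p ℓ'.1 hpℓ'
      have e1 : q = z := huniq q ⟨hqℓ', Ne.symm hne, ⟨ℓ, hpℓ, hqℓ⟩⟩
      have e2 : (r : P) = z := huniq r ⟨(hG' _ _).mp hrℓ',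
        fun h => hrp (Subtype.ext h), ⟨lam.1, (hG' _ _).mp hplam, (hG' _ _).mp hrlam⟩⟩
      have hql : G.inc q lam.1 := by
        rw [e1, ← e2]; exact (hG' _ _).mp hrlam
      have : ℓ = lam.1 := G.unique_line hne hpℓ hqℓ ((hG' _ _).mp hplam) hql
      rw [this] at hℓ; exact hℓ lam.2
  -- Finset cardinalities
  have hLinesCard : ∀ p : P, (Finset.univ.filter fun ℓ => G.inc p ℓ).card = n + 1 := by
    intro p; rw [← ncard_setOf_eq_card_filter]; exact G.pt_lines p
  have hPtsCard : ∀ ℓ : L, (Finset.univ.filter fun p => G.inc p ℓ).card = m + 1 := by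
    intro ℓ; rw [← ncard_setOf_eq_card_filter]; exact G.line_pts ℓ
  have hInLines : ∀ p, ∀ hp : p ∈ P₀,
      (Finset.univ.filter fun ℓ => ℓ ∈ L₀ ∧ G.inc p ℓ).card = k + 1 := by
    intro p hp
    rw [← ncard_setOf_eq_card_filter]
    have himg : {ℓ : L | ℓ ∈ L₀ ∧ G.inc p ℓ}
        = Subtype.val '' {ℓ' : {ℓ // ℓ ∈ L₀} | G'.inc ⟨p, hp⟩ ℓ'} := by
      ext ℓ
      simp only [Set.mem_setOf_eq, Set.mem_image]
      constructor
      · rintro ⟨h1, h2⟩; exact ⟨⟨ℓ, h1⟩, (hG' _ _).mpr h2, rfl⟩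
      · rintro ⟨ℓ', hℓ', rfl⟩; exact ⟨ℓ'.2, (hG' _ _).mp hℓ'⟩
    rw [himg, Set.ncard_image_of_injective _ Subtype.val_injective, G'.pt_lines, hkm]
  have hOutLines : ∀ p, p ∈ P₀ →
      (Finset.univ.filter fun ℓ => ℓ ∉ L₀ ∧ G.inc p ℓ).card = n - k := by
    intro p hp
    have hsplit : (Finset.univ.filter fun ℓ => G.inc p ℓ).card
        = (Finset.univ.filter fun ℓ => ℓ ∈ L₀ ∧ G.inc p ℓ).card
          + (Finset.univ.filter fun ℓ => ℓ ∉ L₀ ∧ G.inc p ℓ).card := by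
      rw [← Finset.card_union_of_disjoint]
      · congr 1; ext ℓ; simp only [Finset.mem_filter, Finset.mem_union]; tauto
      · rw [Finset.disjoint_left]
        intro ℓ h1 h2
        simp only [Finset.mem_filter] at h1 h2
        exact h2.2.1 h1.2.1
    rw [hLinesCard, hInLines p hp] at hsplit
    omega
  have hkn : k ≤ n := by rw [hk]; exact Nat.le_mul_of_pos_left k hm0
  have hnk : n - k = (m - 1) * k := by
    zify [hkn, show 1 ≤ m by omega]
    rw [hk]; push_cast; ring
  set P₀F : Finset P := Finset.univ.filter (fun p => p ∈ P₀) with hP₀F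
  set LoutF : Finset L := Finset.univ.filter (fun ℓ => ℓ ∉ L₀) with hLoutF
  set PinF : L → Finset P := fun ℓ => Finset.univ.filter (fun p => p ∈ P₀ ∧ G.inc p ℓ)
    with hPinF
  have hP₀Fcard : P₀F.card = (m + 1) * (n + 1) := by
    rw [hP₀F, ← ncard_setOf_eq_card_filter]; exact hP₀
  have hLoutFcard : LoutF.card = (m ^ 2 - 1) * k * (n + 1) := by
    rw [hLoutF, ← ncard_setOf_eq_card_filter]; exact hLoutVal
  set A : Finset (P × L) := Finset.univ.filter
    (fun z => z.1 ∈ P₀ ∧ z.2 ∉ L₀ ∧ G.inc z.1 z.2) with hA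
  have hA1 : A.card = P₀F.card * (n - k) := by
    rw [Finset.card_eq_sum_card_fiberwise (f := Prod.fst) (t := P₀F)
      (fun z hz => by simp only [hA, Finset.mem_coe, Finset.mem_filter] at hz
                      simp only [hP₀F, Finset.mem_coe, Finset.mem_filter]; exact ⟨Finset.mem_univ _, hz.2.1⟩)]
    have hfib : ∀ p ∈ P₀F, (A.filter fun z => z.1 = p).card = n - k := by
      intro p hp
      have hp' : p ∈ P₀ := by simpa [hP₀F] using hp
      have himg : A.filter (fun z => z.1 = p)
          = (Finset.univ.filter fun ℓ => ℓ ∉ L₀ ∧ G.inc p ℓ).image (fun ℓ => (p, ℓ)) := by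
        ext z
        obtain ⟨z1, z2⟩ := z
        simp only [hA, Finset.mem_filter, Finset.mem_image, Finset.mem_univ, true_and,
          Prod.mk.injEq]
        constructor
        · rintro ⟨⟨h1, h2, h3⟩, rfl⟩; exact ⟨z2, ⟨h2, h3⟩, rfl, rfl⟩
        · rintro ⟨ℓ, ⟨h2, h3⟩, rfl, rfl⟩; exact ⟨⟨hp', h2, h3⟩, rfl⟩
      rw [himg, Finset.card_image_of_injective _ (fun a b hab => (Prod.mk.injEq _ _ _ _).mp hab |>.2),
        hOutLines p hp']
    rw [Finset.sum_congr rfl hfib, Finset.sum_const, smul_eq_mul]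
  have hA2 : A.card = ∑ ℓ ∈ LoutF, (PinF ℓ).card := by
    rw [Finset.card_eq_sum_card_fiberwise (f := Prod.snd) (t := LoutF)
      (fun z hz => by simp only [hA, Finset.mem_coe, Finset.mem_filter] at hz
                      simp only [hLoutF, Finset.mem_coe, Finset.mem_filter]
                      exact ⟨Finset.mem_univ _, hz.2.2.1⟩)]
    refine Finset.sum_congr rfl (fun ℓ hℓ => ?_)
    have hℓ' : ℓ ∉ L₀ := by simpa [hLoutF] using hℓ
    have himg : A.filter (fun z => z.2 = ℓ) = (PinF ℓ).image (fun p => (p, ℓ)) := by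
      ext z
      obtain ⟨z1, z2⟩ := z
      simp only [hA, hPinF, Finset.mem_filter, Finset.mem_image, Finset.mem_univ, true_and,
        Prod.mk.injEq]
      constructor
      · rintro ⟨⟨h1, h2, h3⟩, rfl⟩; exact ⟨z1, ⟨h1, h3⟩, rfl, rfl⟩
      · rintro ⟨p, ⟨h1, h3⟩, rfl, rfl⟩; exact ⟨⟨h1, hℓ', h3⟩, rfl⟩
    rw [himg, Finset.card_image_of_injective _ (fun a b hab => (Prod.mk.injEq _ _ _ _).mp hab |>.1)]
  have hsumLout : ∑ ℓ ∈ LoutF, (PinF ℓ).card = LoutF.card := by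
    rw [← hA2, hA1, hP₀Fcard, hLoutFcard, hnk]
    zify [hmsq, show 1 ≤ m by omega]; ring
  have hone : ∀ ℓ ∈ LoutF, (PinF ℓ).card = 1 := by
    have hle : ∀ ℓ ∈ LoutF, (PinF ℓ).card ≤ 1 := by
      intro ℓ hℓ
      have hℓ' : ℓ ∉ L₀ := by simpa [hLoutF] using hℓ
      apply Finset.card_le_one.mpr
      intro a ha b hb
      simp only [hPinF, Finset.mem_filter] at ha hb
      exact hL1 ℓ hℓ' a ha.2.1 b hb.2.1 ha.2.2 hb.2.2
    have := (Finset.sum_eq_sum_iff_of_le hle).mp (by rw [hsumLout]; simp)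
    simpa using this
  -- Part 4
  have hPart4 : ∀ ℓ, ℓ ∉ L₀ → {p : P | p ∈ P₀ ∧ G.inc p ℓ}.ncard = 1 := by
    intro ℓ hℓ
    rw [ncard_setOf_eq_card_filter]
    exact hone ℓ (by simp [hLoutF, hℓ])
  -- each outside line has exactly m outside points
  have hOutPts : ∀ ℓ, ℓ ∉ L₀ →
      (Finset.univ.filter fun p => p ∉ P₀ ∧ G.inc p ℓ).card = m := by
    intro ℓ hℓ
    have hsplit : (Finset.univ.filter fun p => G.inc p ℓ).card
        = (PinF ℓ).card + (Finset.univ.filter fun p => p ∉ P₀ ∧ G.inc p ℓ).card := by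
      rw [← Finset.card_union_of_disjoint]
      · congr 1; ext p; simp only [hPinF, Finset.mem_filter, Finset.mem_union]; tauto
      · rw [Finset.disjoint_left]
        intro p h1 h2
        simp only [hPinF, Finset.mem_filter] at h1 h2
        exact h2.2.1 h1.2.1
    rw [hPtsCard, hone ℓ (by simp [hLoutF, hℓ])] at hsplit
    omega
  -- every line through an outside point is outside
  have hnotL : ∀ p, p ∉ P₀ → ∀ ℓ, G.inc p ℓ → ℓ ∉ L₀ :=
    fun p hp ℓ h hmem => hp (hsub ℓ hmem p h)
  set NF : P → Finset P := fun x => Finset.univ.filter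
    (fun q => q ∉ P₀ ∧ q ≠ x ∧ ∃ ℓ, G.inc x ℓ ∧ G.inc q ℓ) with hNF
  have hNFmem : ∀ x q, q ∈ NF x ↔ q ∉ P₀ ∧ q ≠ x ∧ ∃ ℓ, G.inc x ℓ ∧ G.inc q ℓ := by
    intro x q; simp [hNF]
  have hNFcard : ∀ x, x ∉ P₀ → (NF x).card = (n + 1) * (m - 1) := by
    intro x hx
    have heq : NF x = (Finset.univ.filter fun ℓ => G.inc x ℓ).biUnion
        (fun ℓ => (Finset.univ.filter fun p => p ∉ P₀ ∧ G.inc p ℓ).erase x) := by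
      ext q
      simp only [hNF, Finset.mem_filter, Finset.mem_biUnion, Finset.mem_erase, Finset.mem_univ,
        true_and]
      constructor
      · rintro ⟨h1, h2, ℓ, h3, h4⟩; exact ⟨ℓ, h3, h2, h1, h4⟩
      · rintro ⟨ℓ, h3, h2, h1, h4⟩; exact ⟨h1, h2, ℓ, h3, h4⟩
    have hpc : ∀ ℓ ∈ (Finset.univ.filter fun ℓ => G.inc x ℓ),
        ((Finset.univ.filter fun p => p ∉ P₀ ∧ G.inc p ℓ).erase x).card = m - 1 := by
      intro ℓ hℓ
      have hxℓ : G.inc x ℓ := by simpa using hℓ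
      rw [Finset.card_erase_of_mem (by simp [hx, hxℓ]), hOutPts ℓ (hnotL x hx ℓ hxℓ)]
    rw [heq, Finset.card_biUnion, Finset.sum_congr rfl hpc, Finset.sum_const, smul_eq_mul,
      hLinesCard]
    intro ℓ hℓ ℓ' hℓ' hne
    rw [Function.onFun, Finset.disjoint_left]
    intro q h1 h2
    simp only [Finset.mem_coe, Finset.mem_erase, Finset.mem_filter, Finset.mem_univ, true_and] at h1 h2 hℓ hℓ'
    exact hne (G.unique_line h1.1 h1.2.2 hℓ h2.2.2 hℓ')
  -- no triangles
  have hTri : ∀ x q y (ℓ : L), G.inc x ℓ → G.inc q ℓ → x ≠ q → q ≠ y → y ≠ x →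
      (∃ ℓ', G.inc q ℓ' ∧ G.inc y ℓ') → (∃ lam, G.inc x lam ∧ G.inc y lam) → G.inc y ℓ := by
    rintro x q y ℓ hxℓ hqℓ hxq hqy hyx ⟨ℓ', hqℓ', hyℓ'⟩ ⟨lam, hxlam, hylam⟩
    by_cases hyℓ : G.inc y ℓ
    · exact hyℓ
    exfalso
    have hℓ'ℓ : ℓ' ≠ ℓ := fun h => hyℓ (h ▸ hyℓ')
    have hxℓ' : ¬ G.inc x ℓ' := fun h => hℓ'ℓ (G.unique_line hxq h hqℓ' hxℓ hqℓ)
    obtain ⟨z, hz, hu⟩ := G.gq x ℓ' hxℓ'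
    have e1 := hu q ⟨hqℓ', Ne.symm hxq, ⟨ℓ, hxℓ, hqℓ⟩⟩
    have e2 := hu y ⟨hyℓ', hyx, ⟨lam, hxlam, hylam⟩⟩
    exact hqy (e1.trans e2.symm)
  set GD : P → P → Finset P := fun x q => (NF q).filter (fun y => y ∉ NF x ∧ y ≠ x) with hGD
  have hGDcard : ∀ x, x ∉ P₀ → ∀ q ∈ NF x, n * (m - 1) ≤ (GD x q).card := by
    intro x hx q hq
    obtain ⟨hqP, hqx, ℓ, hxℓ, hqℓ⟩ := (hNFmem x q).mp hq
    have hbad : (NF q).filter (fun y => ¬(y ∉ NF x ∧ y ≠ x)) ⊆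
        (Finset.univ.filter fun p => p ∉ P₀ ∧ G.inc p ℓ).erase q := by
      intro y hy
      rw [Finset.mem_filter] at hy
      obtain ⟨hy1, hy2⟩ := hy
      obtain ⟨hyP, hyq, hline⟩ := (hNFmem q y).mp hy1
      by_cases hyx : y = x
      · subst hyx
        exact Finset.mem_erase.mpr ⟨hyq, by simp [hx, hxℓ]⟩
      · have hyNF : y ∈ NF x := by
          by_contra hne
          exact hy2 ⟨hne, hyx⟩
        obtain ⟨-, -, hlinex⟩ := (hNFmem x y).mp hyNF
        have : G.inc y ℓ := hTri x q y ℓ hxℓ hqℓ (Ne.symm hqx) (Ne.symm hyq) hyx hline hlinex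
        exact Finset.mem_erase.mpr ⟨hyq, by simp [hyP, this]⟩
    have h1 : ((NF q).filter (fun y => ¬(y ∉ NF x ∧ y ≠ x))).card ≤ m - 1 := by
      refine le_trans (Finset.card_le_card hbad) ?_
      rw [Finset.card_erase_of_mem (by simp [hqP, hqℓ]), hOutPts ℓ (hnotL q hqP ℓ hqℓ)]
    have h2 := Finset.card_filter_add_card_filter_not
      (s := NF q) (p := fun y => y ∉ NF x ∧ y ≠ x)
    rw [hNFcard q hqP] at h2
    have h3 : (n + 1) * (m - 1) = n * (m - 1) + (m - 1) := by
      zify [show 1 ≤ m by omega]; ring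
    have hGDeq : GD x q = (NF q).filter (fun y => y ∉ NF x ∧ y ≠ x) := rfl
    rw [hGDeq]
    linarith [h1, h2, h3]
  have hOutFcard : (Finset.univ.filter fun p : P => p ∉ P₀).card = (m ^ 2 - 1) * n := by
    rw [← ncard_setOf_eq_card_filter]; exact hOut
  have hm2 : 4 ≤ m ^ 2 := by
    have := Nat.mul_le_mul hm hm
    simpa [pow_two] using this
  have hYpos : 1 ≤ (m ^ 2 - 1) * n := by
    have : 1 ≤ m ^ 2 - 1 := by omega
    exact Nat.one_le_iff_ne_zero.mpr (Nat.mul_ne_zero (by omega) (by omega))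
  obtain ⟨x, hx⟩ : ∃ x : P, x ∉ P₀ := by
    have hne : (Finset.univ.filter fun p : P => p ∉ P₀).Nonempty := by
      rw [← Finset.card_pos, hOutFcard]; omega
    obtain ⟨x, hx⟩ := hne
    exact ⟨x, by simpa using hx⟩
  have key : ∃ q q' y, q ∈ NF x ∧ q' ∈ NF x ∧ q ≠ q' ∧ y ∈ GD x q ∧ y ∈ GD x q' := by
    by_contra hcon
    push_neg at hcon
    have hdisj : ∀ q ∈ NF x, ∀ q' ∈ NF x, q ≠ q' → Disjoint (GD x q) (GD x q') := by
      intro q hq q' hq' hne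
      rw [Finset.disjoint_left]
      intro y h1 h2
      exact hcon q q' y hq hq' hne h1 h2
    have hcardU := Finset.card_biUnion hdisj
    have hsub2 : (NF x).biUnion (GD x) ⊆ (Finset.univ.filter fun p : P => p ∉ P₀).erase x := by
      intro y hy
      rw [Finset.mem_biUnion] at hy
      obtain ⟨q, hq, hyq⟩ := hy
      rw [hGD, Finset.mem_filter] at hyq
      obtain ⟨hy1, -, hyx⟩ := hyq
      obtain ⟨hyP, -, -⟩ := (hNFmem q y).mp hy1
      exact Finset.mem_erase.mpr ⟨hyx, by simpa using hyP⟩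
    have hub : ∑ q ∈ NF x, (GD x q).card ≤ (m ^ 2 - 1) * n - 1 := by
      rw [← hcardU]
      refine le_trans (Finset.card_le_card hsub2) ?_
      rw [Finset.card_erase_of_mem (by simpa using hx), hOutFcard]
    have hlb : (NF x).card * (n * (m - 1)) ≤ ∑ q ∈ NF x, (GD x q).card := by
      have := Finset.card_nsmul_le_sum (NF x) (fun q => (GD x q).card) (n * (m - 1))
        (fun q hq => hGDcard x hx q hq)
      simpa [smul_eq_mul] using this
    rw [hNFcard x hx] at hlb
    have hnum : (m ^ 2 - 1) * n ≤ (n + 1) * (m - 1) * (n * (m - 1)) := by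
      have hsq : m ^ 2 - 1 = (m + 1) * (m - 1) := by
        have := Nat.sq_sub_sq m 1
        simpa using this
      have h7 : (m + 1) * (m - 1) ≤ (n + 1) * (m - 1) :=
        Nat.mul_le_mul_right _ (by omega)
      have h8 : m + 1 ≤ (m + 1) * (m - 1) := by
        have := Nat.mul_le_mul_left (m + 1) (show 1 ≤ m - 1 by omega)
        simpa using this
      rw [hsq, show (m + 1) * (m - 1) * n = (m + 1) * (n * (m - 1)) by ring,
        show (n + 1) * (m - 1) * (n * (m - 1)) = ((n + 1) * (m - 1)) * (n * (m - 1)) by ring]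
      exact Nat.mul_le_mul_right _ (le_trans h8 h7)
    have hlt : ∑ q ∈ NF x, (GD x q).card < (m ^ 2 - 1) * n :=
      lt_of_le_of_lt hub (Nat.sub_lt (by omega) one_pos)
    linarith [hlb, hnum, hlt]
  obtain ⟨q, q', y, hqmem, hq'mem, hqq', hyq, hyq'⟩ := key
  obtain ⟨hqP, hqx, ℓ1, hxℓ1, hqℓ1⟩ := (hNFmem x q).mp hqmem
  obtain ⟨hq'P, hq'x, ℓ4, hxℓ4, hq'ℓ4⟩ := (hNFmem x q').mp hq'mem
  rw [hGD, Finset.mem_filter] at hyq hyq'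
  obtain ⟨hyNFq, hyNFx, hyx⟩ := hyq
  obtain ⟨hyNFq', -, -⟩ := hyq'
  obtain ⟨hyP, hyqne, ℓ2, hqℓ2, hyℓ2⟩ := (hNFmem q y).mp hyNFq
  obtain ⟨-, hyq'ne, ℓ3, hq'ℓ3, hyℓ3⟩ := (hNFmem q' y).mp hyNFq'
  have hxy_nc : ∀ lam : L, ¬ (G.inc x lam ∧ G.inc y lam) := by
    rintro lam ⟨h1, h2⟩
    exact hyNFx ((hNFmem x y).mpr ⟨hyP, hyx, lam, h1, h2⟩)
  have hl12 : ℓ1 ≠ ℓ2 := fun h => hxy_nc ℓ2 ⟨h ▸ hxℓ1, hyℓ2⟩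
  have hl13 : ℓ1 ≠ ℓ3 := fun h => hxy_nc ℓ3 ⟨h ▸ hxℓ1, hyℓ3⟩
  have hl24 : ℓ2 ≠ ℓ4 := fun h => hxy_nc ℓ2 ⟨h ▸ hxℓ4, hyℓ2⟩
  have hl34 : ℓ3 ≠ ℓ4 := fun h => hxy_nc ℓ3 ⟨h ▸ hxℓ4, hyℓ3⟩
  have hl14 : ℓ1 ≠ ℓ4 := by
    intro h
    subst h
    have hyl1 : ¬ G.inc y ℓ1 := fun hy => hxy_nc ℓ1 ⟨hxℓ1, hy⟩
    obtain ⟨z, hz, hu⟩ := G.gq y ℓ1 hyl1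
    have e1 := hu q ⟨hqℓ1, Ne.symm hyqne, ⟨ℓ2, hyℓ2, hqℓ2⟩⟩
    have e2 := hu q' ⟨hq'ℓ4, Ne.symm hyq'ne, ⟨ℓ3, hyℓ3, hq'ℓ3⟩⟩
    exact hqq' (e1.trans e2.symm)
  have hl23 : ℓ2 ≠ ℓ3 := by
    intro h
    subst h
    have hxl2 : ¬ G.inc x ℓ2 := fun hx2 => hxy_nc ℓ2 ⟨hx2, hyℓ2⟩
    obtain ⟨z, hz, hu⟩ := G.gq x ℓ2 hxl2
    have e1 := hu q ⟨hqℓ2, hqx, ⟨ℓ1, hxℓ1, hqℓ1⟩⟩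
    have e2 := hu q' ⟨hq'ℓ3, hq'x, ⟨ℓ4, hxℓ4, hq'ℓ4⟩⟩
    exact hqq' (e1.trans e2.symm)
  have hΛ1 : ℓ1 ∉ L₀ := hnotL x hx ℓ1 hxℓ1
  have hΛ2 : ℓ2 ∉ L₀ := hnotL q hqP ℓ2 hqℓ2
  have hΛ3 : ℓ3 ∉ L₀ := hnotL q' hq'P ℓ3 hq'ℓ3
  have hΛ4 : ℓ4 ∉ L₀ := hnotL x hx ℓ4 hxℓ4
  -- girth lower bound
  have hnoshort : ∀ (a : ({p : P // p ∉ P₀} ⊕ {ℓ : L // ℓ ∉ L₀}))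
      (w : (incGraph (fun (p : {p : P // p ∉ P₀}) (ℓ : {ℓ : L // ℓ ∉ L₀}) =>
        G.inc p.1 ℓ.1)).Walk a a),
      w.IsCycle → 8 ≤ w.length := by
    intro a w hw
    by_contra hlt
    push_neg at hlt
    have h3 := hw.three_le_length
    have heven : Even w.length := (incGraph_walk_parity w).mpr rfl
    have h46 : w.length = 4 ∨ w.length = 6 := by
      obtain ⟨c, hc⟩ := heven; omega
    obtain ⟨-, -, hnd⟩ := (SimpleGraph.Walk.isCycle_def _).mp hw
    rcases h46 with h4 | h6
    · cases w with
      | nil => simp at h4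
      | @cons _ b _ h1 w1 =>
      cases w1 with
      | nil => simp at h4
      | @cons _ c _ h2 w2 =>
      cases w2 with
      | nil => simp at h4
      | @cons _ d _ h3' w3 =>
      cases w3 with
      | nil => simp at h4
      | @cons _ e _ h4' w4 =>
      cases w4 with
      | @cons _ f _ h5' w5 =>
        simp only [SimpleGraph.Walk.length_cons] at h4; omega
      | nil =>
        simp only [SimpleGraph.Walk.support_cons, SimpleGraph.Walk.support_nil,
          List.tail_cons] at hnd
        rcases a with pa | la <;> rcases b with pb | lb <;> rcases c with pc | lc <;>
          rcases d with pd | ld <;>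
          simp only [incGraph_adj_inl_inr, incGraph_adj_inr_inl, incGraph_adj_inl_inl,
            incGraph_adj_inr_inr] at h1 h2 h3' h4'
        · -- points pa pc, lines lb ld
          have h5 : lb ≠ ld := fun hEq => by simp [hEq] at hnd
          have h6 : pa ≠ pc := fun hEq => by simp [hEq] at hnd
          have : lb.1 = ld.1 :=
            G.unique_line (fun hv => h6 (Subtype.ext hv)) h1 h2 h4' h3'
          exact h5 (Subtype.ext this)
        · have h5 : la ≠ lc := fun hEq => by simp [hEq] at hnd
          have h6 : pb ≠ pd := fun hEq => by simp [hEq] at hnd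
          have : la.1 = lc.1 :=
            G.unique_line (fun hv => h6 (Subtype.ext hv)) h1 h4' h2 h3'
          exact h5 (Subtype.ext this)
    · cases w with
      | nil => simp at h6
      | @cons _ b _ h1 w1 =>
      cases w1 with
      | nil => simp at h6
      | @cons _ c _ h2 w2 =>
      cases w2 with
      | nil => simp at h6
      | @cons _ d _ h3' w3 =>
      cases w3 with
      | nil => simp at h6
      | @cons _ e _ h4' w4 =>
      cases w4 with
      | nil => simp at h6
      | @cons _ f _ h5' w5 =>
      cases w5 with
      | nil => simp at h6
      | @cons _ g _ h6' w6 =>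
      cases w6 with
      | @cons _ i _ h7' w7 =>
        simp only [SimpleGraph.Walk.length_cons] at h6; omega
      | nil =>
        simp only [SimpleGraph.Walk.support_cons, SimpleGraph.Walk.support_nil,
          List.tail_cons] at hnd
        rcases a with pa | la <;> rcases b with pb | lb <;> rcases c with pc | lc <;>
          rcases d with pd | ld <;> rcases e with pe | le' <;> rcases f with pf | lf <;>
          simp only [incGraph_adj_inl_inr, incGraph_adj_inr_inl, incGraph_adj_inl_inl,
            incGraph_adj_inr_inr] at h1 h2 h3' h4' h5' h6'
        · -- pa lb pc ld pe lf
          have d1 : pa ≠ pc := fun hEq => by simp [hEq] at hnd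
          have d2 : pa ≠ pe := fun hEq => by simp [hEq] at hnd
          have d3 : pc ≠ pe := fun hEq => by simp [hEq] at hnd
          have d4 : lb ≠ ld := fun hEq => by simp [hEq] at hnd
          have hnl : ¬ G.inc pa.1 ld.1 := by
            intro hbad
            exact d4 (Subtype.ext (G.unique_line (fun hv => d1 (Subtype.ext hv)) h1 h2 hbad h3'))
          obtain ⟨z, hz, hu⟩ := G.gq pa.1 ld.1 hnl
          have e1 := hu pc.1 ⟨h3', fun hv => d1 (Subtype.ext hv.symm), ⟨lb.1, h1, h2⟩⟩
          have e2 := hu pe.1 ⟨h4', fun hv => d2 (Subtype.ext hv.symm), ⟨lf.1, h6', h5'⟩⟩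
          exact d3 (Subtype.ext (e1.trans e2.symm))
        · -- la pb lc pd le' pf
          have d1 : pb ≠ pd := fun hEq => by simp [hEq] at hnd
          have d2 : pb ≠ pf := fun hEq => by simp [hEq] at hnd
          have d3 : pd ≠ pf := fun hEq => by simp [hEq] at hnd
          have d5 : lc ≠ le' := fun hEq => by simp [hEq] at hnd
          have hnl : ¬ G.inc pb.1 le'.1 := by
            intro hbad
            exact d5 (Subtype.ext (G.unique_line (fun hv => d1 (Subtype.ext hv)) h2 h3' hbad h4'))
          obtain ⟨z, hz, hu⟩ := G.gq pb.1 le'.1 hnl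
          have e1 := hu pd.1 ⟨h4', fun hv => d1 (Subtype.ext hv.symm), ⟨lc.1, h2, h3'⟩⟩
          have e2 := hu pf.1 ⟨h5', fun hv => d2 (Subtype.ext hv.symm), ⟨la.1, h1, h6'⟩⟩
          exact d3 (Subtype.ext (e1.trans e2.symm))
  -- upper bound: an 8-cycle
  have hub : (incGraph (fun (p : {p : P // p ∉ P₀}) (ℓ : {ℓ : L // ℓ ∉ L₀}) =>
      G.inc p.1 ℓ.1)).egirth ≤ 8 := by
    let I : {p : P // p ∉ P₀} → {ℓ : L // ℓ ∉ L₀} → Prop := fun p ℓ => G.inc p.1 ℓ.1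
    have a1 : (incGraph I).Adj (Sum.inl ⟨x, hx⟩) (Sum.inr ⟨ℓ1, hΛ1⟩) := hxℓ1
    have a2 : (incGraph I).Adj (Sum.inr ⟨ℓ1, hΛ1⟩) (Sum.inl ⟨q, hqP⟩) := hqℓ1
    have a3 : (incGraph I).Adj (Sum.inl ⟨q, hqP⟩) (Sum.inr ⟨ℓ2, hΛ2⟩) := hqℓ2
    have a4 : (incGraph I).Adj (Sum.inr ⟨ℓ2, hΛ2⟩) (Sum.inl ⟨y, hyP⟩) := hyℓ2
    have a5 : (incGraph I).Adj (Sum.inl ⟨y, hyP⟩) (Sum.inr ⟨ℓ3, hΛ3⟩) := hyℓ3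
    have a6 : (incGraph I).Adj (Sum.inr ⟨ℓ3, hΛ3⟩) (Sum.inl ⟨q', hq'P⟩) := hq'ℓ3
    have a7 : (incGraph I).Adj (Sum.inl ⟨q', hq'P⟩) (Sum.inr ⟨ℓ4, hΛ4⟩) := hq'ℓ4
    have a8 : (incGraph I).Adj (Sum.inr ⟨ℓ4, hΛ4⟩) (Sum.inl ⟨x, hx⟩) := hxℓ4
    let w : (incGraph I).Walk (Sum.inl ⟨x, hx⟩) (Sum.inl ⟨x, hx⟩) :=
      SimpleGraph.Walk.cons a1 (SimpleGraph.Walk.cons a2 (SimpleGraph.Walk.cons a3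
        (SimpleGraph.Walk.cons a4 (SimpleGraph.Walk.cons a5 (SimpleGraph.Walk.cons a6
        (SimpleGraph.Walk.cons a7 (SimpleGraph.Walk.cons a8 SimpleGraph.Walk.nil)))))))
    have hlen : w.length = 8 := rfl
    have hwc : w.IsCycle := by
      rw [SimpleGraph.Walk.isCycle_def]
      refine ⟨?_, by simp [w], ?_⟩
      · rw [SimpleGraph.Walk.isTrail_def]
        simp [w, Subtype.ext_iff, hl12, hl13, hl14, hl23, hl24, hl34,
          Ne.symm hl12, Ne.symm hl13, Ne.symm hl14, Ne.symm hl23, Ne.symm hl24, Ne.symm hl34,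
          hqx, hq'x, hyx, hqq', hyqne, hyq'ne,
          Ne.symm hqx, Ne.symm hq'x, Ne.symm hyx, Ne.symm hqq', Ne.symm hyqne, Ne.symm hyq'ne]
      · simp [w, Subtype.ext_iff, hl12, hl13, hl14, hl23, hl24, hl34,
          Ne.symm hl12, Ne.symm hl13, Ne.symm hl14, Ne.symm hl23, Ne.symm hl24, Ne.symm hl34,
          hqx, hq'x, hyx, hqq', hyqne, hyq'ne,
          Ne.symm hqx, Ne.symm hq'x, Ne.symm hyx, Ne.symm hqq', Ne.symm hyqne, Ne.symm hyq'ne]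
    have hle : (incGraph I).egirth ≤ (w.length : ℕ∞) := by
      rw [SimpleGraph.egirth]
      exact le_trans (iInf_le _ (Sum.inl ⟨x, hx⟩)) (le_trans (iInf_le _ w) (iInf_le _ hwc))
    rw [hlen] at hle
    exact_mod_cast hle
  have hegirth : (incGraph (fun (p : {p : P // p ∉ P₀}) (ℓ : {ℓ : L // ℓ ∉ L₀}) =>
      G.inc p.1 ℓ.1)).egirth = 8 := by
    refine le_antisymm hub ?_
    rw [SimpleGraph.le_egirth]
    intro a w hw
    exact_mod_cast hnoshort a w hw
  have hgirth : (incGraph (fun (p : {p : P // p ∉ P₀}) (ℓ : {ℓ : L // ℓ ∉ L₀}) =>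
      G.inc p.1 ℓ.1)).girth = 8 := by
    rw [SimpleGraph.girth, hegirth]; rfl
  -- degrees
  have hdeg1 : ∀ p : {p : P // p ∉ P₀},
      ((incGraph (fun (p : {p : P // p ∉ P₀}) (ℓ : {ℓ : L // ℓ ∉ L₀}) =>
        G.inc p.1 ℓ.1)).neighborSet (Sum.inl p)).ncard = n + 1 := by
    intro p
    have h1 : (incGraph (fun (p : {p : P // p ∉ P₀}) (ℓ : {ℓ : L // ℓ ∉ L₀}) =>
        G.inc p.1 ℓ.1)).neighborSet (Sum.inl p)
        = Sum.inr '' {ℓ : {ℓ : L // ℓ ∉ L₀} | G.inc p.1 ℓ.1} := by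
      ext v
      rcases v with pq | ℓ
      · simp [SimpleGraph.mem_neighborSet]
      · simp [SimpleGraph.mem_neighborSet]
    rw [h1, Set.ncard_image_of_injective _ Sum.inr_injective]
    have h2 : Subtype.val '' {ℓ : {ℓ : L // ℓ ∉ L₀} | G.inc p.1 ℓ.1}
        = {ℓ : L | G.inc p.1 ℓ} := by
      ext ℓ
      simp only [Set.mem_image, Set.mem_setOf_eq]
      constructor
      · rintro ⟨⟨ℓ', hℓ'⟩, h, rfl⟩; exact h
      · intro h; exact ⟨⟨ℓ, hnotL p.1 p.2 ℓ h⟩, h, rfl⟩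
    rw [← Set.ncard_image_of_injective _ Subtype.val_injective, h2]
    exact G.pt_lines p.1
  have hdeg2 : ∀ ℓ : {ℓ : L // ℓ ∉ L₀},
      ((incGraph (fun (p : {p : P // p ∉ P₀}) (ℓ : {ℓ : L // ℓ ∉ L₀}) =>
        G.inc p.1 ℓ.1)).neighborSet (Sum.inr ℓ)).ncard = m := by
    intro ℓ
    have h1 : (incGraph (fun (p : {p : P // p ∉ P₀}) (ℓ : {ℓ : L // ℓ ∉ L₀}) =>
        G.inc p.1 ℓ.1)).neighborSet (Sum.inr ℓ)
        = Sum.inl '' {p : {p : P // p ∉ P₀} | G.inc p.1 ℓ.1} := by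
      ext v
      rcases v with pq | ℓ'
      · simp [SimpleGraph.mem_neighborSet]
      · simp [SimpleGraph.mem_neighborSet]
    rw [h1, Set.ncard_image_of_injective _ Sum.inl_injective]
    have h2 : Subtype.val '' {p : {p : P // p ∉ P₀} | G.inc p.1 ℓ.1}
        = {p : P | p ∉ P₀ ∧ G.inc p ℓ.1} := by
      ext p
      simp only [Set.mem_image, Set.mem_setOf_eq]
      constructor
      · rintro ⟨⟨p', hp'⟩, h, rfl⟩; exact ⟨hp', h⟩
      · rintro ⟨hp, h⟩; exact ⟨⟨p, hp⟩, h, rfl⟩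
    rw [← Set.ncard_image_of_injective _ Subtype.val_injective, h2,
      ncard_setOf_eq_card_filter]
    exact hOutPts ℓ.1 ℓ.2
  -- total order of the graph
  have hcard : Nat.card ({p : P // p ∉ P₀} ⊕ {ℓ : L // ℓ ∉ L₀})
      = (m + n + 1) * (m ^ 2 - 1) * n / m := by
    rw [Nat.card_sum]
    have e1 : Nat.card {p : P // p ∉ P₀} = (m ^ 2 - 1) * n := by
      have := Nat.card_coe_set_eq {p : P | p ∉ P₀}
      rw [hOut] at this
      exact this
    have e2 : Nat.card {ℓ : L // ℓ ∉ L₀} = (m ^ 2 - 1) * k * (n + 1) := by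
      have := Nat.card_coe_set_eq {ℓ : L | ℓ ∉ L₀}
      rw [hLoutVal] at this
      exact this
    rw [e1, e2,
      show (m + n + 1) * (m ^ 2 - 1) * n = m * ((m + n + 1) * (m ^ 2 - 1) * k) by rw [hk]; ring,
      Nat.mul_div_cancel_left _ hm0]
    zify [hmsq]
    have hnz : (n : ℤ) = m * k := by exact_mod_cast hk
    rw [hnz]; ring
  exact ⟨hOut, hLout, hArith, hPart4, hgirth, hdeg1, hdeg2, hcard⟩
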